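/- Let X be a nonnegative absolutely continuous random variable with cumulative distribution function F and support (0,l), and let X_θ, θ > 0, satisfy the proportional reversed hazard model F_{X_θ}(x) = [F(x)]^θ, with ℰ_θ(α) := (1/Γ(α)) E[ X_θ (−ln F_{X_θ}(X_θ))^{α−1} ] finite for the relevant orders. Then for all α > 0 and every integer n ≥ 2: CE_{α+n}(X_θ) = (−1)^n CE_α(X_θ) + ℰ_θ(α+n) − ℰ_θ(α+n+1) + (−1)^{n−1} [ℰ_θ(α) − ℰ_θ(α+1)]. -/

import Mathlib

open MeasureTheory Set
open scoped ProbabilityTheory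

/-- Fractional generalized cumulative entropy of a distribution function `G`
over a set `S`. -/
noncomputable def fgceOn (G : ℝ → ℝ) (S : Set ℝ) (α : ℝ) : ℝ :=
  (1 / Real.Gamma (α + 1)) * ∫ x in S, G x * (-Real.log (G x)) ^ α

/-- The quantity `ℰ_θ(α) = (1/Γ(α)) E[ X_θ (−ln F_{X_θ}(X_θ))^{α−1} ]` for the
proportional reversed hazard model with baseline CDF `F` and parameter `θ`. -/
noncomputable def EthetaPRH {Ω : Type*} [MeasureSpace Ω]
    (Xθ : Ω → ℝ) (F : ℝ → ℝ) (θ α : ℝ) : ℝ :=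
  (1 / Real.Gamma α) * ∫ ω, Xθ ω * (-Real.log ((F (Xθ ω)) ^ θ)) ^ (α - 1) ∂ℙ

section AuxLemmas

lemma aux_contOn (β u₀ : ℝ) (hβ : 0 ≤ β) (h0 : 0 < u₀) :
    ContinuousOn (fun u : ℝ => (-Real.log u) ^ β) (Icc u₀ 1) := by
  apply ContinuousOn.rpow_const
  · exact (Real.continuousOn_log.mono (by intro x hx; simp; intro h; rw [h] at hx; exact absurd hx.1 (by linarith) )).neg
  · intro x hx; exact Or.inr hβ

lemma aux_J1 {β u₀ : ℝ} (hβ : 0 < β) (h0 : 0 < u₀) (h1 : u₀ < 1) :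
    IntervalIntegrable (fun u : ℝ => (-Real.log u) ^ (β - 1)) volume u₀ 1 := by
  rcases le_or_gt 1 β with hb | hb
  · exact (ContinuousOn.intervalIntegrable (by
      rw [uIcc_of_le h1.le]; exact aux_contOn (β - 1) u₀ (by linarith) h0))
  · have Jd : IntervalIntegrable (fun u : ℝ => (1 - u) ^ (β - 1)) volume u₀ 1 := by
      have := (intervalIntegral.intervalIntegrable_rpow' (a := 1 - u₀) (b := 0)
        (r := β - 1) (by linarith)).comp_sub_left 1
      simpa using this
    rw [intervalIntegrable_iff_integrableOn_Ioc_of_le h1.le] at Jd ⊢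
    apply Integrable.mono Jd
    · rw [← Measure.restrict_congr_set Ioo_ae_eq_Ioc]
      refine ContinuousOn.aestronglyMeasurable ?_ measurableSet_Ioo
      refine ContinuousOn.rpow_const ?_ ?_
      · refine (Real.continuousOn_log.mono ?_).neg
        intro x hx; simp only [mem_compl_iff, mem_singleton_iff]
        intro h; rw [h] at hx; exact absurd hx.1 (by linarith)
      · intro x hx
        exact Or.inl (ne_of_gt (by have := Real.log_neg (lt_trans h0 hx.1) hx.2; linarith))
    rw [ae_restrict_iff' measurableSet_Ioc]
    filter_upwards with u hu
    rcases eq_or_lt_of_le hu.2 with rfl | hu1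
    · simp [Real.log_one, Real.zero_rpow (by linarith : β - 1 ≠ 0)]
    · have hu0 : 0 < u := lt_trans h0 hu.1
      have h1u : 0 < 1 - u := by linarith
      have hle : 1 - u ≤ -Real.log u := by
        have := Real.log_le_sub_one_of_pos hu0; linarith
      have := Real.rpow_le_rpow_of_nonpos h1u hle (by linarith : β - 1 ≤ 0)
      rw [Real.norm_eq_abs, Real.norm_eq_abs, abs_of_nonneg (Real.rpow_nonneg (by linarith) _),
        abs_of_nonneg (Real.rpow_nonneg h1u.le _)]
      exact this

lemma aux_ftc {β u₀ : ℝ} (hβ : 0 < β) (h0 : 0 < u₀) (h1 : u₀ < 1) :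
    ∫ u in Ioc u₀ 1, (β * (-Real.log u) ^ (β - 1) - (-Real.log u) ^ β)
      = u₀ * (-Real.log u₀) ^ β := by
  rw [← intervalIntegral.integral_of_le h1.le]
  have key := intervalIntegral.integral_eq_sub_of_hasDeriv_right_of_le (a := u₀) (b := 1)
    (f := fun u => -(u * (-Real.log u) ^ β))
    (f' := fun u => β * (-Real.log u) ^ (β - 1) - (-Real.log u) ^ β)
    h1.le
    (by exact ((continuousOn_id.mul (aux_contOn β u₀ hβ.le h0)).neg))
    (by
      intro x hx
      have hx0 : 0 < x := lt_trans h0 hx.1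
      have hlog : Real.log x < 0 := Real.log_neg hx0 hx.2
      have hne : -Real.log x ≠ 0 := ne_of_gt (by linarith)
      have hd1 : HasDerivAt (fun u : ℝ => -Real.log u) (-x⁻¹) x :=
        (Real.hasDerivAt_log hx0.ne').neg
      have hd2 := hd1.rpow_const (p := β) (Or.inl hne)
      have hd3 := ((hasDerivAt_id x).mul hd2).neg
      refine HasDerivAt.hasDerivWithinAt ?_
      convert hd3 using 1
      · rfl
      simp only [id_eq]
      field_simp
      ring)
    (((aux_J1 hβ h0 h1).const_mul β).sub (ContinuousOn.intervalIntegrable (by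
      rw [uIcc_of_le h1.le]; exact aux_contOn β u₀ hβ.le h0)))
  rw [key]
  simp [Real.log_one, Real.zero_rpow hβ.ne']


section Ffacts
variable {f F : ℝ → ℝ}

lemma f_int (hf_prob : ∫ x, f x = 1) : Integrable f := by
  by_contra h
  rw [integral_undef h] at hf_prob
  norm_num at hf_prob

lemma F_diff (hfi : Integrable f) (hF : ∀ x, F x = ∫ t in Set.Iio x, f t)
    {a b : ℝ} (hab : a ≤ b) : F b = F a + ∫ t in a..b, f t := by
  rw [intervalIntegral.integral_of_le hab, hF a, hF b, integral_Ioc_eq_integral_Ioo,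
    ← integral_Ico_eq_integral_Ioo, ← setIntegral_union]
  · rw [Iio_union_Ico (by simp [hab]), max_eq_right hab]
  · exact disjoint_left.mpr fun x hx hx2 => absurd hx2.1 (not_le.mpr hx)
  · exact measurableSet_Ico
  · exact hfi.integrableOn
  · exact hfi.integrableOn

lemma F_mono (hfi : Integrable f) (hf_nonneg : ∀ x, 0 ≤ f x)
    (hF : ∀ x, F x = ∫ t in Set.Iio x, f t) : Monotone F := by
  intro a b hab
  have := F_diff hfi hF hab
  have h2 : 0 ≤ ∫ t in a..b, f t :=
    intervalIntegral.integral_nonneg hab (fun x _ => hf_nonneg x)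
  linarith

lemma F_lt (hfi : Integrable f) (hF : ∀ x, F x = ∫ t in Set.Iio x, f t)
    {a b : ℝ} (hab : a < b) (hpos : ∀ x ∈ Set.Ioo a b, 0 < f x) : F a < F b := by
  have := F_diff hfi hF hab.le
  have h2 : 0 < ∫ t in a..b, f t :=
    intervalIntegral.intervalIntegral_pos_of_pos_on hfi.intervalIntegrable hpos hab
  linarith

lemma F_cont (hfi : Integrable f) (hF : ∀ x, F x = ∫ t in Set.Iio x, f t) :
    Continuous F := by
  have hrep : F = fun b => F 0 + ∫ t in (0:ℝ)..b, f t := by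
    funext b
    rcases le_total 0 b with hb | hb
    · exact F_diff hfi hF hb
    · have := F_diff hfi hF hb
      rw [intervalIntegral.integral_symm] at this
      linarith
  rw [hrep]
  exact continuous_const.add
    (intervalIntegral.continuous_primitive (fun a b => hfi.intervalIntegrable) 0)

lemma F_nonneg (hf_nonneg : ∀ x, 0 ≤ f x)
    (hF : ∀ x, F x = ∫ t in Set.Iio x, f t) (x : ℝ) : 0 ≤ F x := by
  rw [hF]
  exact setIntegral_nonneg measurableSet_Iio (fun t _ => hf_nonneg t)

lemma F_le_one (hfi : Integrable f) (hf_nonneg : ∀ x, 0 ≤ f x)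
    (hf_prob : ∫ x, f x = 1)
    (hF : ∀ x, F x = ∫ t in Set.Iio x, f t) (x : ℝ) : F x ≤ 1 := by
  rw [hF, ← hf_prob]
  exact setIntegral_le_integral hfi (Filter.Eventually.of_forall hf_nonneg)

lemma F_zero (hf_supp0 : ∀ t, t < 0 → f t = 0)
    (hF : ∀ x, F x = ∫ t in Set.Iio x, f t) {x : ℝ} (hx : x ≤ 0) : F x = 0 := by
  rw [hF, setIntegral_congr_fun measurableSet_Iio
    (g := fun _ => (0:ℝ)) (fun t ht => hf_supp0 t (by simpa using lt_of_lt_of_le ht hx))]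
  simp

lemma F_one (hfi : Integrable f) (hf_prob : ∫ x, f x = 1)
    (hF : ∀ x, F x = ∫ t in Set.Iio x, f t)
    {x : ℝ} (hzero : ∀ t, x ≤ t → f t = 0) : F x = 1 := by
  have hsplit := intervalIntegral.integral_Iio_add_Ici (μ := volume) (f := f) (b := x)
    hfi.integrableOn hfi.integrableOn
  have h2 : ∫ t in Set.Ici x, f t = 0 := by
    rw [setIntegral_congr_fun measurableSet_Ici (g := fun _ => (0:ℝ))
      (fun t ht => hzero t ht)]
    simp
  rw [hF]
  rw [hf_prob] at hsplit
  linarith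

end Ffacts


lemma swap_step {Ω : Type*} [MeasureSpace Ω] [IsProbabilityMeasure (ℙ : Measure Ω)]
    (X : Ω → ℝ) (c : Ω → ℝ) (hX : Measurable X) (hXnn : ∀ ω, 0 ≤ X ω)
    (hc : Measurable c) (hcnn : ∀ ω, 0 ≤ c ω)
    (hint : Integrable (fun ω => X ω * c ω) ℙ) :
    Integrable (fun t => if 0 < t then ∫ ω in {ω' | t < X ω'}, c ω ∂ℙ else 0) volume ∧
    (∫ ω, X ω * c ω ∂ℙ)
      = ∫ t, (if 0 < t then ∫ ω in {ω' | t < X ω'}, c ω ∂ℙ else 0) := by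
  set H : Ω → ℝ → ℝ := fun ω t => (Set.Ioo 0 (X ω)).indicator (fun _ => c ω) t with hH
  have hXset : ∀ t : ℝ, MeasurableSet {ω' | t < X ω'} := fun t =>
    measurableSet_lt measurable_const hX
  have hHuncurry : Function.uncurry H
      = Set.indicator {p : Ω × ℝ | 0 < p.2 ∧ p.2 < X p.1} (fun p => c p.1) := by
    funext p
    simp only [Function.uncurry, hH, Set.indicator_apply, Set.mem_Ioo, Set.mem_setOf_eq]
  have hHm : Measurable (Function.uncurry H) := by
    rw [hHuncurry]
    exact (hc.comp measurable_fst).indicator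
      ((measurableSet_lt measurable_const measurable_snd).inter
        (measurableSet_lt measurable_snd (hX.comp measurable_fst)))
  have hinner : ∀ ω, (∫ t, H ω t) = X ω * c ω := by
    intro ω
    rw [hH]
    rw [integral_indicator_const (c ω) measurableSet_Ioo]
    simp [Real.volume_Ioo, ENNReal.toReal_ofReal (hXnn ω), mul_comm, max_eq_left (hXnn ω)]
  have hinnernorm : ∀ ω, (∫ t, ‖H ω t‖) = X ω * c ω := by
    intro ω
    have : (fun t => ‖H ω t‖) = fun t => (Set.Ioo 0 (X ω)).indicator (fun _ => ‖c ω‖) t := by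
      funext t
      rw [hH]
      exact norm_indicator_eq_indicator_norm _ _
    rw [this, integral_indicator_const _ measurableSet_Ioo]
    simp [Real.volume_Ioo, ENNReal.toReal_ofReal (hXnn ω), mul_comm, max_eq_left (hXnn ω),
      Real.norm_eq_abs, abs_of_nonneg (hcnn ω)]
  have hprod : Integrable (Function.uncurry H) ((ℙ : Measure Ω).prod volume) := by
    rw [MeasureTheory.integrable_prod_iff hHm.aestronglyMeasurable]
    constructor
    · refine Filter.Eventually.of_forall (fun ω => ?_)
      show Integrable (fun t => H ω t) volume
      rw [hH]
      rw [integrable_indicator_iff measurableSet_Ioo]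
      exact (integrableOn_const_iff).mpr (Or.inr (by rw [Real.volume_Ioo]; exact ENNReal.ofReal_lt_top))
    · have : (fun ω => ∫ t, ‖Function.uncurry H (ω, t)‖) = fun ω => X ω * c ω := by
        funext ω; exact hinnernorm ω
      rw [show (fun x => ∫ (y : ℝ), ‖Function.uncurry H (x, y)‖) = fun ω => X ω * c ω from this]
      exact hint
  have hg : ∀ t, (∫ ω, H ω t ∂ℙ)
      = (if 0 < t then ∫ ω in {ω' | t < X ω'}, c ω ∂ℙ else 0) := by
    intro t
    by_cases ht : 0 < t
    · have : (fun ω => H ω t) = fun ω => Set.indicator {ω' | t < X ω'} c ω := by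
        funext ω
        simp only [hH, Set.indicator_apply, Set.mem_Ioo, Set.mem_setOf_eq, ht, true_and]
      rw [this, integral_indicator (hXset t), if_pos ht]
    · have : (fun ω => H ω t) = fun _ => (0:ℝ) := by
        funext ω
        simp only [hH, Set.indicator_apply, Set.mem_Ioo]
        rw [if_neg (by tauto)]
      rw [this, integral_zero, if_neg ht]
  constructor
  · have := hprod.integral_prod_right
    refine this.congr (Filter.Eventually.of_forall fun t => ?_)
    exact hg t
  · have hswap := MeasureTheory.integral_integral_swap hprod
    calc ∫ ω, X ω * c ω ∂ℙ = ∫ ω, ∫ t, H ω t ∂ℙ := by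
          congr 1; funext ω; rw [hinner ω]
      _ = ∫ t, ∫ ω, H ω t ∂ℙ := hswap
      _ = ∫ t, (if 0 < t then ∫ ω in {ω' | t < X ω'}, c ω ∂ℙ else 0) := by
          congr 1; funext t; rw [hg t]


lemma map_uniform {Ω : Type*} [MeasureSpace Ω] [IsProbabilityMeasure (ℙ : Measure Ω)]
    (G : ℝ → ℝ) (S : Set ℝ) (X : Ω → ℝ)
    (hGm : Measurable G) (hX : Measurable X)
    (hG0 : ∀ x, 0 ≤ G x) (hG1 : ∀ x, G x ≤ 1)
    (hcdf : ∀ x, (ℙ {ω | X ω ≤ x}) = ENNReal.ofReal (G x))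
    (hpos : ∀ᵐ ω ∂ℙ, 0 < G (X ω))
    (hsurj : ∀ u : ℝ, 0 < u → u < 1 → ∃ x ∈ S, G x = u)
    (hiff : ∀ x ∈ S, ∀ᵐ ω ∂ℙ, (G (X ω) ≤ G x ↔ X ω ≤ x)) :
    Measure.map (fun ω => G (X ω)) ℙ = volume.restrict (Set.Ioc 0 1) := by
  haveI := Measure.isProbabilityMeasure_map (μ := (ℙ : Measure Ω))
    (f := fun ω => G (X ω)) (hGm.comp hX).aemeasurable
  apply Measure.ext_of_Iic
  intro a
  rw [Measure.map_apply (show Measurable fun ω => G (X ω) from hGm.comp hX) measurableSet_Iic,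
    Measure.restrict_apply measurableSet_Iic]
  rcases lt_or_ge a 0 with ha | ha
  · have h1 : (fun ω => G (X ω)) ⁻¹' Iic a = ∅ := by
      apply eq_empty_of_forall_notMem
      intro ω hω
      exact absurd (le_trans (hG0 (X ω)) hω) (not_le.mpr ha)
    have h2 : Iic a ∩ Ioc 0 1 = (∅ : Set ℝ) := by
      apply eq_empty_of_forall_notMem
      intro u hu
      exact absurd (lt_of_lt_of_le hu.2.1 hu.1) (not_lt.mpr ha.le)
    rw [h1, h2]; simp
  rcases lt_or_ge a 1 with ha1 | ha1
  · rcases eq_or_lt_of_le ha with rfl | hapos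
    · have hset : ((fun ω => G (X ω)) ⁻¹' Iic 0 : Set Ω) = {ω | ¬ (0 < G (X ω))} := by
        ext ω; simp [not_lt]
      have h1 : ℙ ((fun ω => G (X ω)) ⁻¹' Iic 0) = 0 := by
        rw [hset]; exact ae_iff.mp hpos
      have h2 : Iic (0:ℝ) ∩ Ioc 0 1 = (∅ : Set ℝ) := by
        apply eq_empty_of_forall_notMem
        intro u hu
        exact absurd (lt_of_lt_of_le hu.2.1 hu.1) (by simp)
      rw [h1, h2]; simp
    · obtain ⟨x, hxS, hGx⟩ := hsurj a hapos ha1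
      have hae : ((fun ω => G (X ω)) ⁻¹' Iic a : Set Ω) =ᵐ[ℙ] {ω | X ω ≤ x} := by
        rw [Filter.eventuallyEq_set]
        filter_upwards [hiff x hxS] with ω hω
        simp only [mem_preimage, mem_Iic, mem_setOf_eq, ← hGx] at *
        exact hω
      rw [measure_congr hae, hcdf x, hGx]
      have h2 : Iic a ∩ Ioc 0 1 = Ioc 0 a := by
        ext u
        simp only [mem_inter_iff, mem_Iic, mem_Ioc]
        exact ⟨fun h => ⟨h.2.1, h.1⟩, fun h => ⟨h.2, h.1, le_trans h.2 ha1.le⟩⟩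
      rw [h2, Real.volume_Ioc, sub_zero]
  · have h1 : (fun ω => G (X ω)) ⁻¹' Iic a = univ := by
      apply eq_univ_of_forall
      intro ω
      exact le_trans (hG1 (X ω)) ha1
    have h2 : Iic a ∩ Ioc 0 1 = Ioc 0 1 := by
      apply inter_eq_self_of_subset_right
      intro u hu
      exact le_trans hu.2 ha1
    rw [h1, h2, measure_univ, Real.volume_Ioc]
    norm_num

lemma key_identity {Ω : Type*} [MeasureSpace Ω] [IsProbabilityMeasure (ℙ : Measure Ω)]
    (G : ℝ → ℝ) (S : Set ℝ) (X : Ω → ℝ) (β : ℝ) (hβ : 0 < β)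
    (hSm : MeasurableSet S) (hSsub : S ⊆ Set.Ioi 0)
    (hGm : Measurable G)
    (hG0 : ∀ x, 0 ≤ G x) (hG1 : ∀ x, G x ≤ 1)
    (hG01 : ∀ x ∈ S, 0 < G x ∧ G x < 1)
    (hX : Measurable X) (hXnn : ∀ ω, 0 ≤ X ω)
    (hmap : Measure.map (fun ω => G (X ω)) ℙ = volume.restrict (Set.Ioc 0 1))
    (hiff : ∀ t ∈ S, ∀ᵐ ω ∂ℙ, (t < X ω ↔ G t < G (X ω)))
    (hnull : ∀ t, 0 < t → t ∉ S → ℙ {ω' | t < X ω'} = 0)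
    (hI1 : Integrable (fun ω => X ω * (-Real.log (G (X ω))) ^ (β - 1)) ℙ)
    (hI2 : Integrable (fun ω => X ω * (-Real.log (G (X ω))) ^ β) ℙ) :
    ∫ x in S, G x * (-Real.log (G x)) ^ β
      = β * (∫ ω, X ω * (-Real.log (G (X ω))) ^ (β - 1) ∂ℙ)
        - ∫ ω, X ω * (-Real.log (G (X ω))) ^ β ∂ℙ := by
  have hWm : ∀ γ : ℝ, Measurable (fun u : ℝ => (-Real.log u) ^ γ) := by
    intro γ
    have h : Measurable (fun y : ℝ => y ^ γ) := by fun_prop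
    exact h.comp Real.measurable_log.neg
  have hcm : ∀ γ : ℝ, Measurable (fun ω => (-Real.log (G (X ω))) ^ γ) := fun γ =>
    (hWm γ).comp (hGm.comp hX)
  have hcnn : ∀ (γ : ℝ) ω, 0 ≤ (-Real.log (G (X ω))) ^ γ := fun γ ω =>
    Real.rpow_nonneg (by
      have := Real.log_nonpos (hG0 (X ω)) (hG1 (X ω)); linarith) _
  have S1 := swap_step X (fun ω => (-Real.log (G (X ω))) ^ (β - 1)) hX hXnn (hcm _) (hcnn _) hI1
  have S2 := swap_step X (fun ω => (-Real.log (G (X ω))) ^ β) hX hXnn (hcm _) (hcnn _) hI2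
  set g1 : ℝ → ℝ := fun t =>
    if 0 < t then ∫ ω in {ω' | t < X ω'}, (-Real.log (G (X ω))) ^ (β - 1) ∂ℙ else 0 with hg1
  set g2 : ℝ → ℝ := fun t =>
    if 0 < t then ∫ ω in {ω' | t < X ω'}, (-Real.log (G (X ω))) ^ β ∂ℙ else 0 with hg2
  have hpoint : ∀ t, β * g1 t - g2 t
      = S.indicator (fun x => G x * (-Real.log (G x)) ^ β) t := by
    intro t
    by_cases ht : 0 < t
    · by_cases htS : t ∈ S
      · obtain ⟨hu0, hu1⟩ := hG01 t htS
        have ha : ∀ γ : ℝ, (∫ ω in {ω' | t < X ω'}, (-Real.log (G (X ω))) ^ γ ∂ℙ)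
            = ∫ u in Set.Ioc (G t) 1, (-Real.log u) ^ γ := by
          intro γ
          have hmeas : AEStronglyMeasurable
              ((Ioi (G t)).indicator (fun u => (-Real.log u) ^ γ))
              (Measure.map (fun ω => G (X ω)) ℙ) :=
            ((hWm γ).indicator measurableSet_Ioi).aestronglyMeasurable
          calc ∫ ω in {ω' | t < X ω'}, (-Real.log (G (X ω))) ^ γ ∂ℙ
              = ∫ ω, ((Ioi (G t)).indicator (fun u => (-Real.log u) ^ γ)) (G (X ω)) ∂ℙ := by
                rw [← integral_indicator (measurableSet_lt measurable_const hX)]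
                apply integral_congr_ae
                filter_upwards [hiff t htS] with ω hω
                simp only [Set.indicator_apply, Set.mem_setOf_eq, Set.mem_Ioi]
                exact if_congr hω rfl rfl
            _ = ∫ u, ((Ioi (G t)).indicator (fun u => (-Real.log u) ^ γ)) u
                  ∂(Measure.map (fun ω => G (X ω)) ℙ) :=
                (integral_map (hGm.comp hX).aemeasurable hmeas).symm
            _ = ∫ u in Set.Ioc 0 1, ((Ioi (G t)).indicator (fun u => (-Real.log u) ^ γ)) u := by
                rw [hmap]
            _ = ∫ u in Set.Ioc 0 1 ∩ Set.Ioi (G t), (-Real.log u) ^ γ :=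
                setIntegral_indicator measurableSet_Ioi
            _ = ∫ u in Set.Ioc (G t) 1, (-Real.log u) ^ γ := by
                rw [Set.Ioc_inter_Ioi, sup_eq_right.mpr hu0.le]
        have hint1 : IntegrableOn (fun u => (-Real.log u) ^ (β - 1)) (Ioc (G t) 1) volume :=
          (intervalIntegrable_iff_integrableOn_Ioc_of_le hu1.le).mp (aux_J1 hβ hu0 hu1)
        have hint2 : IntegrableOn (fun u => (-Real.log u) ^ β) (Ioc (G t) 1) volume :=
          (intervalIntegrable_iff_integrableOn_Ioc_of_le hu1.le).mp
            (ContinuousOn.intervalIntegrable (by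
              rw [uIcc_of_le hu1.le]; exact aux_contOn β _ hβ.le hu0))
        rw [hg1, hg2]
        simp only [if_pos ht]
        rw [ha (β - 1), ha β, Set.indicator_of_mem htS]
        calc β * (∫ u in Set.Ioc (G t) 1, (-Real.log u) ^ (β - 1))
              - ∫ u in Set.Ioc (G t) 1, (-Real.log u) ^ β
            = ∫ u in Set.Ioc (G t) 1,
                (β * (-Real.log u) ^ (β - 1) - (-Real.log u) ^ β) := by
              rw [integral_sub (hint1.const_mul β) hint2, integral_const_mul]
          _ = G t * (-Real.log (G t)) ^ β := aux_ftc hβ hu0 hu1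
      · have hz : (ℙ : Measure Ω).restrict {ω' | t < X ω'} = 0 :=
          Measure.restrict_eq_zero.mpr (hnull t ht htS)
        rw [hg1, hg2]
        simp only [if_pos ht]
        rw [hz]
        simp [Set.indicator_of_notMem htS]
    · have htS : t ∉ S := fun h => ht (hSsub h)
      rw [hg1, hg2]
      simp [if_neg ht, Set.indicator_of_notMem htS]
  calc ∫ x in S, G x * (-Real.log (G x)) ^ β
      = ∫ t, S.indicator (fun x => G x * (-Real.log (G x)) ^ β) t :=
        (integral_indicator hSm).symm
    _ = ∫ t, (β * g1 t - g2 t) := by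
        congr 1; funext t; rw [hpoint t]
    _ = β * (∫ t, g1 t) - ∫ t, g2 t := by
        rw [integral_sub (S1.1.const_mul β) S2.1, integral_const_mul]
    _ = β * (∫ ω, X ω * (-Real.log (G (X ω))) ^ (β - 1) ∂ℙ)
        - ∫ ω, X ω * (-Real.log (G (X ω))) ^ β ∂ℙ := by
        rw [S1.2, S2.2]

end AuxLemmas

/-- under the proportional reversed hazard model `F_{X_θ} = F^θ`, where the
baseline CDF `F` is absolutely continuous (with density `f`) with support `(0,l)`, and
assuming that `ℰ_θ` is finite at the relevant orders, for all `α > 0` and all integers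
`n ≥ 2`:
`CE_{α+n}(X_θ) = (−1)^n CE_α(X_θ) + ℰ_θ(α+n) − ℰ_θ(α+n+1)
   + (−1)^{n−1} (ℰ_θ(α) − ℰ_θ(α+1))`. -/
theorem fgce_prhm_recurrence_n
    {Ω : Type*} [MeasureSpace Ω] [IsProbabilityMeasure (ℙ : Measure Ω)]
    (F f : ℝ → ℝ) (l : EReal)
    (hl : (∃ lr : ℝ, 0 < lr ∧ l = (lr : EReal)) ∨ l = ⊤)
    (α θ : ℝ) (hα : 0 < α) (hθ : 0 < θ)
    (n : ℕ) (hn : 2 ≤ n)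
    -- the baseline distribution is absolutely continuous with density `f`
    -- supported on `S = {x | 0 < x < l}`
    (hf_meas : Measurable f) (hf_nonneg : ∀ x, 0 ≤ f x)
    (hf_pos : ∀ x : ℝ, 0 < x → (x : EReal) < l → 0 < f x)
    (hf_supp : ∀ x : ℝ, ¬ (0 < x ∧ (x : EReal) < l) → f x = 0)
    (hf_prob : ∫ x, f x = 1)
    (hF : ∀ x, F x = ∫ t in Set.Iio x, f t)
    -- the random variable `X_θ` with CDF `F^θ`
    (Xθ : Ω → ℝ) (hXθ : Measurable Xθ) (hXθnn : ∀ ω, 0 ≤ Xθ ω)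
    (hcdf : ∀ x : ℝ, (ℙ {ω | Xθ ω ≤ x}).toReal = (F x) ^ θ)
    -- `ℰ_θ` is finite for the relevant orders
    (hEfin : ∀ k : ℕ, k ≤ n + 1 → Integrable
      (fun ω => Xθ ω * (-Real.log ((F (Xθ ω)) ^ θ)) ^ (α + k - 1)) ℙ) :
    fgceOn (fun x => (F x) ^ θ) {x : ℝ | 0 < x ∧ (x : EReal) < l} (α + n)
      = (-1 : ℝ) ^ n * fgceOn (fun x => (F x) ^ θ) {x : ℝ | 0 < x ∧ (x : EReal) < l} α
        + EthetaPRH Xθ F θ (α + n) - EthetaPRH Xθ F θ (α + n + 1)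
        + (-1 : ℝ) ^ (n - 1) * (EthetaPRH Xθ F θ α - EthetaPRH Xθ F θ (α + 1)) := by
  set S : Set ℝ := {x : ℝ | 0 < x ∧ (x : EReal) < l} with hSdef
  -- basic facts
  have hfi : Integrable f := f_int hf_prob
  have hFmono : Monotone F := F_mono hfi hf_nonneg hF
  have hFcont : Continuous F := F_cont hfi hF
  have hFnn : ∀ x, 0 ≤ F x := F_nonneg hf_nonneg hF
  have hFle1 : ∀ x, F x ≤ 1 := F_le_one hfi hf_nonneg hf_prob hF
  have hF0 : ∀ x : ℝ, x ≤ 0 → F x = 0 :=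
    fun x hx => F_zero (fun t ht => hf_supp t (fun h => absurd h.1 (by linarith))) hF hx
  -- S facts
  have hSsub : S ⊆ Set.Ioi 0 := fun x hx => hx.1
  have hSm : MeasurableSet S := by
    rcases hl with ⟨lr, hlr, rfl⟩ | rfl
    · have : S = Set.Ioo 0 lr := by
        ext x; simp [hSdef, EReal.coe_lt_coe_iff]
      rw [this]; exact measurableSet_Ioo
    · have : S = Set.Ioi 0 := by
        ext x; simp [hSdef, EReal.coe_lt_top]
      rw [this]; exact measurableSet_Ioi
  -- interior positivity of f
  have hfpos' : ∀ x ∈ S, ∀ t ∈ Set.Ioo 0 x, 0 < f t := by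
    intro x hx t ht
    exact hf_pos t ht.1 (lt_trans (by exact_mod_cast ht.2) hx.2)
  have hFpos : ∀ x ∈ S, 0 < F x := by
    intro x hx
    have h0 : F 0 = 0 := hF0 0 le_rfl
    have := F_lt hfi hF hx.1 (hfpos' x hx)
    linarith
  have hFlt1 : ∀ x ∈ S, F x < 1 := by
    intro x hx
    obtain ⟨b, hbS, hxb⟩ : ∃ b, b ∈ S ∧ x < b := by
      rcases hl with ⟨lr, hlr, rfl⟩ | rfl
      · have hxlr : x < lr := by exact_mod_cast hx.2
        refine ⟨(x + lr) / 2, ⟨by have := hx.1; linarith, ?_⟩, by linarith⟩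
        exact_mod_cast (by linarith : (x + lr) / 2 < lr)
      · exact ⟨x + 1, ⟨by have := hx.1; linarith,
          by exact_mod_cast EReal.coe_lt_top (x + 1)⟩, by linarith⟩
    have hlt : F x < F b := by
      apply F_lt hfi hF hxb
      intro t ht
      exact hf_pos t (lt_trans hx.1 ht.1) (lt_trans (by exact_mod_cast ht.2) hbS.2)
    exact lt_of_lt_of_le hlt (hFle1 b)
  have hFstrict : ∀ x ∈ S, ∀ y ∈ S, x < y → F x < F y := by
    intro x hx y hy hxy
    apply F_lt hfi hF hxy
    intro t ht
    exact hf_pos t (lt_trans hx.1 ht.1) (lt_trans (by exact_mod_cast ht.2) hy.2)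
  -- G facts
  set G : ℝ → ℝ := fun x => F x ^ θ with hGdef
  have hrpm : Measurable (fun y : ℝ => y ^ θ) := by fun_prop
  have hGm : Measurable G := hrpm.comp hFcont.measurable
  have hG0 : ∀ x, 0 ≤ G x := fun x => Real.rpow_nonneg (hFnn x) θ
  have hG1 : ∀ x, G x ≤ 1 := fun x => Real.rpow_le_one (hFnn x) (hFle1 x) hθ.le
  have hG01 : ∀ x ∈ S, 0 < G x ∧ G x < 1 := fun x hx =>
    ⟨Real.rpow_pos_of_pos (hFpos x hx) θ,
     Real.rpow_lt_one (hFnn x) (hFlt1 x hx) hθ⟩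
  have hGmono : ∀ x y : ℝ, F x ≤ F y → G x ≤ G y := fun x y h =>
    Real.rpow_le_rpow (hFnn x) h hθ.le
  have hGstrict : ∀ x y : ℝ, F x < F y → G x < G y := fun x y h =>
    Real.rpow_lt_rpow (hFnn x) h hθ
  -- cdf in ENNReal form
  have hcdfE : ∀ x, (ℙ {ω | Xθ ω ≤ x}) = ENNReal.ofReal (G x) := by
    intro x
    have hGx : G x = F x ^ θ := rfl
    rw [hGx, ← hcdf x, ENNReal.ofReal_toReal (measure_ne_top _ _)]
  have hmXle : ∀ x : ℝ, MeasurableSet {ω | Xθ ω ≤ x} := fun x =>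
    measurableSet_le hXθ measurable_const
  -- a.e. membership in S
  have hle0 : ℙ {ω | Xθ ω ≤ 0} = 0 := by
    rw [hcdfE 0, hGdef]
    simp [hF0 0 le_rfl, Real.zero_rpow hθ.ne']
  have hup : ∀ lr : ℝ, 0 < lr → l = (lr : EReal) → ℙ {ω | lr ≤ Xθ ω} = 0 := by
    intro lr hlr hleq
    have hGlr : G lr = 1 := by
      rw [hGdef]
      have : F lr = 1 := F_one hfi hf_prob hF (fun t ht => hf_supp t (by
        rw [hleq]
        rintro ⟨-, h2⟩
        exact absurd (by exact_mod_cast h2 : t < lr) (not_lt.mpr ht)))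
      simp [this]
    have hc : ContinuousAt G lr := by
      have h1 : ContinuousAt (fun y : ℝ => y ^ θ) (F lr) := by
        apply Real.continuousAt_rpow_const
        right; exact hθ.le
      exact h1.comp hFcont.continuousAt
    have key : ∀ δ : ℝ, 0 < δ → (ℙ {ω | lr ≤ Xθ ω}).toReal ≤ δ := by
      intro δ hδ
      have h2 : ∀ᶠ x in nhds lr, 1 - δ < G x := by
        have hmem : Set.Ioi (1 - δ) ∈ nhds (G lr) := by
          rw [hGlr]; exact Ioi_mem_nhds (by linarith)
        exact hc hmem
      obtain ⟨x, hGx, hxlt⟩ : ∃ x, (1 - δ < G x) ∧ x < lr := by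
        have h3 := h2.filter_mono (nhdsWithin_le_nhds (s := Set.Iio lr))
        exact (h3.and eventually_mem_nhdsWithin).exists
      have hsub : {ω | lr ≤ Xθ ω} ⊆ {ω | Xθ ω ≤ x}ᶜ := by
        intro ω hω
        simp only [Set.mem_compl_iff, Set.mem_setOf_eq, not_le] at *
        linarith
      have hm1 : ℙ {ω | lr ≤ Xθ ω} ≤ 1 - ENNReal.ofReal (G x) := by
        refine le_trans (measure_mono hsub) ?_
        rw [prob_compl_eq_one_sub (hmXle x), hcdfE x]
      have ht1 : (ℙ {ω | lr ≤ Xθ ω}).toReal ≤ 1 - G x := by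
        have := ENNReal.toReal_mono (by finiteness) hm1
        rwa [ENNReal.toReal_sub_of_le (ENNReal.ofReal_le_one.mpr (hG1 x)) (by simp),
          ENNReal.toReal_one, ENNReal.toReal_ofReal (hG0 x)] at this
      linarith
    have hz : (ℙ {ω | lr ≤ Xθ ω}).toReal = 0 := by
      by_contra hne
      have hpos : 0 < (ℙ {ω | lr ≤ Xθ ω}).toReal :=
        lt_of_le_of_ne ENNReal.toReal_nonneg (Ne.symm hne)
      have := key _ (half_pos hpos)
      linarith
    exact (ENNReal.toReal_eq_zero_iff _).mp hz |>.resolve_right (by finiteness)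
  have hXS : ∀ᵐ ω ∂(ℙ : Measure Ω), Xθ ω ∈ S := by
    rw [ae_iff]
    rcases hl with ⟨lr, hlr, hleq⟩ | hltop
    · have hsub : {ω | ¬ Xθ ω ∈ S} ⊆ {ω | Xθ ω ≤ 0} ∪ {ω | lr ≤ Xθ ω} := by
        intro ω hω
        simp only [hSdef, Set.mem_setOf_eq, not_and_or, not_lt, hleq] at hω
        rcases hω with h | h
        · exact Or.inl h
        · exact Or.inr (by exact_mod_cast h)
      exact measure_mono_null hsub (measure_union_null hle0 (hup lr hlr hleq))
    · have hsub : {ω | ¬ Xθ ω ∈ S} ⊆ {ω | Xθ ω ≤ 0} := by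
        intro ω hω
        simp only [hSdef, Set.mem_setOf_eq, not_and_or, not_lt, hltop] at hω
        rcases hω with h | h
        · exact h
        · exact absurd (EReal.coe_lt_top (Xθ ω)) (not_lt.mpr h)
      exact measure_mono_null hsub hle0
  -- surjectivity onto (0,1)
  have hsurj : ∀ u : ℝ, 0 < u → u < 1 → ∃ x ∈ S, G x = u := by
    intro u hu0 hu1
    set v := u ^ θ⁻¹ with hv
    have hv0 : 0 < v := Real.rpow_pos_of_pos hu0 _
    have hv1 : v < 1 := Real.rpow_lt_one hu0.le hu1 (by positivity)
    obtain ⟨a, haS, hFa⟩ : ∃ a, a ∈ S ∧ F a < v := by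
      have hev : ∀ᶠ x in nhds 0, F x < v := by
        have hmem : Set.Iio v ∈ nhds (F 0) := by
          rw [hF0 0 le_rfl]; exact Iio_mem_nhds hv0
        exact hFcont.continuousAt hmem
      have hevS : ∀ᶠ x in nhdsWithin 0 (Set.Ioi 0), x ∈ S := by
        rcases hl with ⟨lr, hlr, hleq⟩ | hltop
        · refine Filter.eventually_iff_exists_mem.mpr
            ⟨Set.Ioo 0 lr, Ioo_mem_nhdsGT_of_mem ⟨le_rfl, hlr⟩, ?_⟩
          intro y hy
          exact ⟨hy.1, by rw [hleq]; exact_mod_cast hy.2⟩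
        · refine Filter.Eventually.mono eventually_mem_nhdsWithin ?_
          intro y hy
          exact ⟨hy, by rw [hltop]; exact EReal.coe_lt_top y⟩
      exact ((hev.filter_mono nhdsWithin_le_nhds).and hevS).exists.imp
        (fun a ha => ⟨ha.2, ha.1⟩)
    obtain ⟨b, hbS, hFb⟩ : ∃ b, b ∈ S ∧ v < F b := by
      rcases hl with ⟨lr, hlr, hleq⟩ | hltop
      · have hF1 : F lr = 1 := F_one hfi hf_prob hF (fun t ht => hf_supp t (by
          rw [hleq]; rintro ⟨-, h2⟩
          exact absurd (by exact_mod_cast h2 : t < lr) (not_lt.mpr ht)))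
        have hev : ∀ᶠ x in nhds lr, v < F x := by
          have hmem : Set.Ioi v ∈ nhds (F lr) := by rw [hF1]; exact Ioi_mem_nhds hv1
          exact hFcont.continuousAt hmem
        have hevS : ∀ᶠ x in nhdsWithin lr (Set.Iio lr), x ∈ S := by
          refine Filter.eventually_iff_exists_mem.mpr
            ⟨Set.Ioo 0 lr, Ioo_mem_nhdsLT_of_mem ⟨hlr, le_rfl⟩, ?_⟩
          intro y hy
          exact ⟨hy.1, by rw [hleq]; exact_mod_cast hy.2⟩
        exact ((hev.filter_mono nhdsWithin_le_nhds).and hevS).exists.imp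
          (fun b hb => ⟨hb.2, hb.1⟩)
      · have hu : (⋃ nn : ℕ, Set.Iio (nn : ℝ)) = Set.univ := by
          ext y
          simp only [Set.mem_iUnion, Set.mem_Iio, Set.mem_univ, iff_true]
          exact exists_nat_gt y
        have hten := tendsto_setIntegral_of_monotone (μ := volume)
          (s := fun nn : ℕ => Set.Iio (nn : ℝ)) (f := f)
          (fun nn => measurableSet_Iio)
          (fun i j hij => Set.Iio_subset_Iio (by exact_mod_cast hij))
          (by rw [hu]; exact hfi.integrableOn)
        rw [hu, setIntegral_univ, hf_prob] at hten
        have hev : ∀ᶠ nn : ℕ in Filter.atTop,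
            (∫ x in Set.Iio (nn : ℝ), f x) ∈ Set.Ioi v := hten.eventually_mem (Ioi_mem_nhds hv1)
        obtain ⟨N, hN⟩ := hev.exists
        have hNpos : 0 < (N : ℝ) := by
          by_contra hneg
          push_neg at hneg
          have h0 : F (N : ℝ) = 0 := hF0 _ hneg
          rw [hF] at h0
          simp only [Set.mem_preimage, Set.mem_Ioi] at hN
          rw [h0] at hN
          linarith
        refine ⟨(N : ℝ), ⟨hNpos, by rw [hltop]; exact EReal.coe_lt_top _⟩, ?_⟩
        rw [hF]
        simpa using hN
    have hab : a < b := by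
      by_contra hba
      push_neg at hba
      exact absurd (hFmono hba) (not_le.mpr (by linarith))
    obtain ⟨x, hx, hFx⟩ :=
      intermediate_value_Ioo hab.le hFcont.continuousOn (a := a) (b := b)
        (f := F) ⟨hFa, hFb⟩
    refine ⟨x, ⟨lt_trans haS.1 hx.1, ?_⟩, ?_⟩
    · exact lt_trans (by exact_mod_cast hx.2 : (x : EReal) < (b : EReal)) hbS.2
    · show F x ^ θ = u
      rw [hFx, hv, Real.rpow_inv_rpow hu0.le hθ.ne']
  -- monotonicity correspondences a.e.
  have hmono_iff : ∀ x ∈ S, ∀ᵐ ω ∂(ℙ : Measure Ω), (G (Xθ ω) ≤ G x ↔ Xθ ω ≤ x) := by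
    intro x hx
    filter_upwards [hXS] with ω hωS
    constructor
    · intro h
      by_contra hlt
      push_neg at hlt
      have := hGstrict x (Xθ ω) (hFstrict x hx _ hωS hlt)
      linarith
    · intro h
      exact hGmono _ _ (hFmono h)
  have hiff : ∀ t ∈ S, ∀ᵐ ω ∂(ℙ : Measure Ω), (t < Xθ ω ↔ G t < G (Xθ ω)) := by
    intro t ht
    filter_upwards [hXS] with ω hωS
    constructor
    · intro h
      exact hGstrict _ _ (hFstrict t ht _ hωS h)
    · intro h
      by_contra hle
      push_neg at hle
      have := hGmono _ _ (hFmono hle)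
      linarith
  have hnull : ∀ t : ℝ, 0 < t → t ∉ S → ℙ {ω' | t < Xθ ω'} = 0 := by
    intro t ht htS
    rcases hl with ⟨lr, hlr, hleq⟩ | hltop
    · have hlrt : lr ≤ t := by
        by_contra hlt
        push_neg at hlt
        exact htS ⟨ht, by rw [hleq]; exact_mod_cast hlt⟩
      refine measure_mono_null ?_ (hup lr hlr hleq)
      intro ω hω
      simp only [Set.mem_setOf_eq] at *
      linarith
    · exact absurd ⟨ht, by rw [hltop]; exact EReal.coe_lt_top t⟩ htS
  have hposG : ∀ᵐ ω ∂(ℙ : Measure Ω), 0 < G (Xθ ω) := by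
    filter_upwards [hXS] with ω hω
    exact (hG01 _ hω).1
  have hmap := map_uniform G S Xθ hGm hXθ hG0 hG1 hcdfE hposG hsurj hmono_iff
  -- integrability in the needed forms
  have hIexp : ∀ k : ℕ, k ≤ n + 1 → ∀ γ : ℝ, γ = α + k - 1 →
      Integrable (fun ω => Xθ ω * (-Real.log (G (Xθ ω))) ^ γ) ℙ := by
    intro k hk γ hγ
    rw [hγ]
    exact hEfin k hk
  have K1 := key_identity G S Xθ α hα hSm hSsub hGm hG0 hG1 hG01 hXθ hXθnn hmap hiff hnull
    (hIexp 0 (by omega) (α - 1) (by push_cast; ring))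
    (hIexp 1 (by omega) α (by push_cast; ring))
  have K2 := key_identity G S Xθ (α + n) (by positivity) hSm hSsub hGm hG0 hG1 hG01 hXθ hXθnn
    hmap hiff hnull
    (hIexp n (by omega) (α + n - 1) rfl)
    (hIexp (n + 1) le_rfl (α + n) (by push_cast; ring))
  -- final algebra
  have hGapp : ∀ y, F y ^ θ = G y := fun y => rfl
  simp only [fgceOn, EthetaPRH, hGapp]
  rw [K1, K2]
  have e1 : α + (n : ℝ) + 1 - 1 = α + n := by ring
  have e2 : α + 1 - 1 = α := by ring
  rw [e1, e2]
  have hΓα : Real.Gamma α ≠ 0 := (Real.Gamma_pos_of_pos hα).ne'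
  have hΓαn : Real.Gamma (α + n) ≠ 0 := (Real.Gamma_pos_of_pos (by positivity)).ne'
  rw [Real.Gamma_add_one (by positivity : (0:ℝ) < α + n).ne',
    Real.Gamma_add_one hα.ne']
  obtain ⟨m, rfl⟩ : ∃ m, n = m + 2 := ⟨n - 2, by omega⟩
  have hsub : m + 2 - 1 = m + 1 := by omega
  rw [hsub]
  have hαn0 : α + ((m : ℝ) + 2) ≠ 0 := by push_cast; positivity
  field_simp
  push_cast
  ring
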